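/- Let 0 < ε ≤ δ/2. In ℝⁿ, every open ball of diameter δ contains at least ⌈(δ/(4ε))ⁿ⌉ pairwise disjoint closed balls of diameter ε. -/
import Mathlib

open Metric MeasureTheory Set ENNReal

/-- Packing lemma: a closed ball of radius `ρ` in `ℝⁿ` contains a finite `ε'`-separated set
with at least `(ρ/ε')ⁿ` points. -/
theorem exists_separated_points_in_closedBall (n : ℕ) (ε' ρ : ℝ) (hε' : 0 < ε') (hρ : 0 < ρ)
    (x : EuclideanSpace ℝ (Fin n)) :
    ∃ S : Set (EuclideanSpace ℝ (Fin n)), ∃ hS : S.Finite, S ⊆ closedBall x ρ ∧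
      S.Pairwise (fun a b => ε' ≤ dist a b) ∧
      (ρ / ε') ^ n ≤ (hS.toFinset.card : ℝ) := by
  classical
  -- Zorn: maximal ε'-separated subset of the closed ball
  obtain ⟨S, hSP, hSmax⟩ :
      ∃ S, S ∈ {S : Set (EuclideanSpace ℝ (Fin n)) |
          S ⊆ closedBall x ρ ∧ S.Pairwise (fun a b => ε' ≤ dist a b)} ∧
        ∀ T ∈ {S : Set (EuclideanSpace ℝ (Fin n)) |
          S ⊆ closedBall x ρ ∧ S.Pairwise (fun a b => ε' ≤ dist a b)}, S ⊆ T → T = S := by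
    have hchains : ∀ c ⊆ {S : Set (EuclideanSpace ℝ (Fin n)) |
        S ⊆ closedBall x ρ ∧ S.Pairwise (fun a b => ε' ≤ dist a b)},
        IsChain (· ⊆ ·) c → ∃ ub ∈ {S : Set (EuclideanSpace ℝ (Fin n)) |
        S ⊆ closedBall x ρ ∧ S.Pairwise (fun a b => ε' ≤ dist a b)}, ∀ s ∈ c, s ⊆ ub := by
      intro c hc hchain
      refine ⟨⋃₀ c, ⟨?_, ?_⟩, fun s hs => subset_sUnion_of_mem hs⟩
      · exact sUnion_subset fun s hs => (hc hs).1
      · intro a ha b hb hab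
        obtain ⟨s, hs, has⟩ := ha
        obtain ⟨t, ht, hbt⟩ := hb
        rcases hchain.total hs ht with h | h
        · exact (hc ht).2 (h has) hbt hab
        · exact (hc hs).2 has (h hbt) hab
    obtain ⟨S, hS⟩ := zorn_subset _ hchains
    exact ⟨S, hS.1, fun T hT hST => le_antisymm (hS.2 hT hST) hST⟩
  obtain ⟨hSb, hSsep⟩ := hSP
  -- maximality: every point of the ball is within ε' of some point of S
  have hcover : ∀ y ∈ closedBall x ρ, ∃ s ∈ S, dist y s < ε' := by
    intro y hy
    by_contra h
    push_neg at h
    have hyS : y ∉ S := fun hyS => by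
      have := h y hyS
      simp only [dist_self] at this
      linarith
    have hins : insert y S ∈ {S : Set (EuclideanSpace ℝ (Fin n)) |
        S ⊆ closedBall x ρ ∧ S.Pairwise (fun a b => ε' ≤ dist a b)} := by
      constructor
      · exact insert_subset hy hSb
      · refine hSsep.insert fun b hb hne => ?_
        have := h b hb
        exact ⟨this, by rwa [dist_comm]⟩
    have := hSmax _ hins (subset_insert y S)
    exact hyS (this ▸ mem_insert y S)
  -- S is finite
  have hfin : S.Finite := by
    obtain ⟨t, htfin, htcov⟩ :=
      totallyBounded_iff.mp (isCompact_closedBall x ρ).totallyBounded (ε' / 2) (half_pos hε')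
    choose f hft hfd using fun (s : EuclideanSpace ℝ (Fin n)) (hs : s ∈ S) => by
      have := htcov (hSb hs)
      simp only [mem_iUnion, mem_ball] at this
      exact this
    have hinj : Set.InjOn (fun s => if h : s ∈ S then f s h else x) S := by
      intro a ha b hb hab
      simp only [dif_pos ha, dif_pos hb] at hab
      by_contra hne
      have h1 := hfd a ha
      have h2 := hfd b hb
      rw [hab] at h1
      have : dist a b < ε' := by
        calc dist a b ≤ dist a (f b hb) + dist (f b hb) b := dist_triangle _ _ _
          _ < ε' / 2 + ε' / 2 := add_lt_add h1 (by rw [dist_comm]; exact h2)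
          _ = ε' := by ring
      exact absurd (hSsep ha hb hne) (not_le.mpr this)
    have himg : (fun s => if h : s ∈ S then f s h else x) '' S ⊆ t := by
      rintro _ ⟨s, hs, rfl⟩
      simp only [dif_pos hs]
      exact hft s hs
    exact Set.Finite.of_finite_image (htfin.subset himg) hinj
  refine ⟨S, hfin, hSb, hSsep, ?_⟩
  -- volume argument
  set F := hfin.toFinset with hF
  have hcov2 : closedBall x ρ ⊆ ⋃ s ∈ F, closedBall s ε' := by
    intro y hy
    obtain ⟨s, hs, hds⟩ := hcover y hy
    simp only [mem_iUnion]
    exact ⟨s, hfin.mem_toFinset.mpr hs, le_of_lt hds⟩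
  have hrank : Module.finrank ℝ (EuclideanSpace ℝ (Fin n)) = n := finrank_euclideanSpace_fin
  have hvol1 : volume (closedBall x ρ)
      = ENNReal.ofReal (ρ ^ n) * volume (closedBall (0 : EuclideanSpace ℝ (Fin n)) 1) := by
    rw [Measure.addHaar_closedBall' volume x hρ.le, hrank]
  have hle : ENNReal.ofReal (ρ ^ n) * volume (closedBall (0 : EuclideanSpace ℝ (Fin n)) 1)
      ≤ (F.card : ℝ≥0∞) * ENNReal.ofReal (ε' ^ n)
        * volume (closedBall (0 : EuclideanSpace ℝ (Fin n)) 1) := by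
    rw [← hvol1]
    calc volume (closedBall x ρ) ≤ volume (⋃ s ∈ F, closedBall s ε') := measure_mono hcov2
      _ ≤ ∑ s ∈ F, volume (closedBall s ε') := measure_biUnion_finset_le F _
      _ = (F.card : ℝ≥0∞) * ENNReal.ofReal (ε' ^ n)
            * volume (closedBall (0 : EuclideanSpace ℝ (Fin n)) 1) := by
          have : ∀ s ∈ F, volume (closedBall s ε') = ENNReal.ofReal (ε' ^ n)
              * volume (closedBall (0 : EuclideanSpace ℝ (Fin n)) 1) := fun s _ => by
            rw [Measure.addHaar_closedBall' volume s hε'.le, hrank]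
          rw [Finset.sum_congr rfl this, Finset.sum_const, nsmul_eq_mul, mul_assoc]
  have hVpos : (0 : ℝ≥0∞) < volume (closedBall (0 : EuclideanSpace ℝ (Fin n)) 1) :=
    measure_closedBall_pos volume 0 one_pos
  have hVfin : volume (closedBall (0 : EuclideanSpace ℝ (Fin n)) 1) ≠ ⊤ :=
    measure_closedBall_lt_top.ne
  have hle2 : ENNReal.ofReal (ρ ^ n) ≤ (F.card : ℝ≥0∞) * ENNReal.ofReal (ε' ^ n) :=
    (ENNReal.mul_le_mul_iff_left hVpos.ne' hVfin).mp hle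
  have hle3 : ρ ^ n ≤ (F.card : ℝ) * ε' ^ n := by
    have h := ENNReal.toReal_mono
      (ENNReal.mul_ne_top (by simp) ENNReal.ofReal_ne_top) hle2
    rw [ENNReal.toReal_ofReal (pow_nonneg hρ.le n), ENNReal.toReal_mul,
      ENNReal.toReal_ofReal (pow_nonneg hε'.le n)] at h
    simpa using h
  rw [div_pow, div_le_iff₀ (pow_pos hε' n)]
  exact hle3

/-- Let `0 < ε ≤ δ/2`. In `ℝⁿ`, every open ball of diameter `δ` contains at
least `⌈(δ/(4ε))ⁿ⌉` pairwise disjoint closed balls of diameter `ε`. -/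
theorem ball_contains_disjoint_closedBalls (n : ℕ) (ε δ : ℝ) (hε : 0 < ε) (hεδ : ε ≤ δ / 2)
    (x : EuclideanSpace ℝ (Fin n)) :
    ∃ c : Fin ⌈(δ / (4 * ε)) ^ n⌉₊ → EuclideanSpace ℝ (Fin n),
      (∀ i, Metric.closedBall (c i) (ε / 2) ⊆ Metric.ball x (δ / 2)) ∧
      Pairwise fun i j =>
        Disjoint (Metric.closedBall (c i) (ε / 2)) (Metric.closedBall (c j) (ε / 2)) := by
  classical
  have hδ : 0 < δ := by linarith
  by_cases hN : ⌈(δ / (4 * ε)) ^ n⌉₊ ≤ 1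
  · -- at most one ball needed: the constant family works
    refine ⟨fun _ => x, fun i => closedBall_subset_ball (by linarith), ?_⟩
    intro i j hij
    exact absurd (Fin.ext (by omega : (i : ℕ) = (j : ℕ))) hij
  · push_neg at hN
    have h1 : (1 : ℝ) < (δ / (4 * ε)) ^ n := by
      have := Nat.lt_ceil.mp hN
      exact_mod_cast this
    have hbase : (1 : ℝ) < δ / (4 * ε) := by
      by_contra h
      push_neg at h
      have : (δ / (4 * ε)) ^ n ≤ 1 :=
        pow_le_one₀ (div_nonneg hδ.le (by linarith)) h
      linarith
    have h4ε : 4 * ε < δ := (one_lt_div (by linarith : (0:ℝ) < 4 * ε)).mp hbase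
    -- use the packing lemma with ε' = 5ε/4 and ρ = 5δ/16
    obtain ⟨S, hfin, hSb, hSsep, hcard⟩ := exists_separated_points_in_closedBall n
      (5 / 4 * ε) (5 / 16 * δ) (by linarith) (by linarith) x
    have hratio : (5 / 16 * δ) / (5 / 4 * ε) = δ / (4 * ε) := by
      field_simp
      ring
    rw [hratio] at hcard
    have hNle : ⌈(δ / (4 * ε)) ^ n⌉₊ ≤ hfin.toFinset.card := by
      rw [Nat.ceil_le]
      exact hcard
    have hNle' : ⌈(δ / (4 * ε)) ^ n⌉₊ ≤ Fintype.card hfin.toFinset := by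
      rwa [Fintype.card_coe]
    set e := (Fintype.equivFin hfin.toFinset).symm
    refine ⟨fun i => (e (Fin.castLE hNle' i) : EuclideanSpace ℝ (Fin n)), ?_, ?_⟩
    · intro i y hy
      have hmem : (e (Fin.castLE hNle' i) : EuclideanSpace ℝ (Fin n)) ∈ S := by
        have := (e (Fin.castLE hNle' i)).2
        rwa [hfin.mem_toFinset] at this
      have h1 := hSb hmem
      rw [Metric.mem_closedBall] at h1 hy
      rw [Metric.mem_ball]
      calc dist y x ≤ dist y _ + dist _ x := dist_triangle y _ x
        _ ≤ ε / 2 + 5 / 16 * δ := add_le_add hy h1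
        _ < δ / 2 := by linarith
    · intro i j hij
      have hne : (e (Fin.castLE hNle' i) : EuclideanSpace ℝ (Fin n))
          ≠ (e (Fin.castLE hNle' j) : EuclideanSpace ℝ (Fin n)) := by
        intro h
        apply hij
        have h2 := e.injective (Subtype.ext h)
        exact Fin.castLE_injective hNle' h2
      have hmi : (e (Fin.castLE hNle' i) : EuclideanSpace ℝ (Fin n)) ∈ S := by
        have := (e (Fin.castLE hNle' i)).2
        rwa [hfin.mem_toFinset] at this
      have hmj : (e (Fin.castLE hNle' j) : EuclideanSpace ℝ (Fin n)) ∈ S := by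
        have := (e (Fin.castLE hNle' j)).2
        rwa [hfin.mem_toFinset] at this
      have hd := hSsep hmi hmj hne
      exact Metric.closedBall_disjoint_closedBall (by linarith)
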